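/- There exists a constant C > 0 such that for all sufficiently large n the following holds: if A is a tie-free n×n real matrix with unit Euclidean norm rows satisfying β(A) ≥ √(2·log(2n)) − log(log(2n))/√(2·log(2n)), then, writing α_i = |S_i(A)|/2^n, one has Σ_{i=1}^n (α_i − 1/(2n))² ≤ C·log(log(2n))/√(log(2n)). -/

import Mathlib

open Finset

noncomputable section
open scoped Classical

/-- The sign `±1` associated to a Boolean. -/
def sgn (b : Bool) : ℝ := if b then 1 else -1

/-- The hypercube `{-1,1}^n` as a finite set of vectors in `ℝ^n`. -/
def cube (n : ℕ) : Finset (Fin n → ℝ) :=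
  (Finset.univ : Finset (Fin n → Bool)).image (fun ε i => sgn (ε i))

/-- `β(A) = 2^{-n} ∑_{x ∈ {-1,1}^n} ‖Ax‖_∞` (the `Pi` norm on `Fin n → ℝ` is the sup norm). -/
def badBeta {n : ℕ} (A : Matrix (Fin n) (Fin n) ℝ) : ℝ :=
  (2 ^ n : ℝ)⁻¹ * ∑ x ∈ cube n, ‖A.mulVec x‖

/-- The cell `S_i(A) = {x ∈ {-1,1}^n : ‖Ax‖_∞ = ⟨a_i, x⟩}`. -/
def cellS {n : ℕ} (A : Matrix (Fin n) (Fin n) ℝ) (i : Fin n) : Finset (Fin n → ℝ) :=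
  (cube n).filter (fun x => ‖A.mulVec x‖ = ∑ j, A i j * x j)

/-- `A` is tie-free: no two distinct rows attain the same absolute inner product with a
hypercube vertex. -/
def TieFree {n : ℕ} (A : Matrix (Fin n) (Fin n) ℝ) : Prop :=
  ∀ x ∈ cube n, ∀ i j : Fin n, i ≠ j →
    (∑ k, A i k * x k) ^ 2 ≠ (∑ k, A j k * x k) ^ 2

/-- Level-1 Fourier weight of `f : {-1,1}^n → ℝ`. -/
def W1 {n : ℕ} (f : (Fin n → ℝ) → ℝ) : ℝ :=
  ∑ i : Fin n, ((2 ^ n : ℝ)⁻¹ * ∑ x ∈ cube n, f x * x i) ^ 2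

lemma sgn_inj : Function.Injective sgn := by
  intro a b h
  cases a <;> cases b <;> simp [sgn] at h ⊢ <;> norm_num at h

lemma cubemap_inj (n : ℕ) : Function.Injective (fun (ε : Fin n → Bool) (i : Fin n) => sgn (ε i)) := by
  intro a b h
  funext i
  exact sgn_inj (congrFun h i)

lemma mem_cube {n : ℕ} {x : Fin n → ℝ} : x ∈ cube n ↔ ∀ i, x i = 1 ∨ x i = -1 := by
  constructor
  · rintro hx i
    simp only [cube, mem_image] at hx
    obtain ⟨ε, _, rfl⟩ := hx
    cases h : ε i <;> simp [sgn, h]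
  · intro h
    simp only [cube, mem_image]
    refine ⟨fun i => decide (x i = 1), mem_univ _, funext fun i => ?_⟩
    rcases h i with h1 | h1 <;> simp [h1, sgn] <;> norm_num

lemma card_cube (n : ℕ) : (cube n).card = 2 ^ n := by
  rw [cube, Finset.card_image_of_injective _ (cubemap_inj n)]
  simp

lemma neg_mem_cube {n : ℕ} {x : Fin n → ℝ} (hx : x ∈ cube n) : -x ∈ cube n := by
  rw [mem_cube] at hx ⊢
  intro i
  rcases hx i with h | h <;> simp [h]

lemma sum_cube {n : ℕ} (f : (Fin n → ℝ) → ℝ) :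
    ∑ x ∈ cube n, f x = ∑ ε : Fin n → Bool, f (fun i => sgn (ε i)) := by
  rw [cube, Finset.sum_image (fun a _ b _ h => cubemap_inj n h)]

/-- MGF bound. -/
lemma mgf_bound {n : ℕ} (a : Fin n → ℝ) (ha : ∑ j, a j ^ 2 = 1) (l : ℝ) :
    ∑ x ∈ cube n, Real.exp (l * ∑ j, a j * x j) ≤ 2 ^ n * Real.exp (l ^ 2 / 2) := by
  rw [sum_cube]
  have h1 : ∀ ε : Fin n → Bool, Real.exp (l * ∑ j, a j * sgn (ε j))
      = ∏ j, Real.exp (l * (a j * sgn (ε j))) := by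
    intro ε
    rw [← Real.exp_sum, Finset.mul_sum]
  simp only [h1]
  have h2 : ∑ ε : Fin n → Bool, ∏ j, Real.exp (l * (a j * sgn (ε j)))
      = ∏ j, ∑ b : Bool, Real.exp (l * (a j * sgn b)) := by
    rw [Finset.prod_univ_sum, Fintype.piFinset_univ]
  rw [h2]
  have h3 : ∀ j, ∑ b : Bool, Real.exp (l * (a j * sgn b)) ≤ 2 * Real.exp (l ^ 2 * a j ^ 2 / 2) := by
    intro j
    have := Real.cosh_le_exp_half_sq (l * a j)
    rw [Real.cosh_eq] at this
    have h4 : ∑ b : Bool, Real.exp (l * (a j * sgn b))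
        = Real.exp (l * a j) + Real.exp (-(l * a j)) := by
      simp [sgn]
      try ring
    rw [h4]
    have h5 : (l * a j) ^ 2 / 2 = l ^ 2 * a j ^ 2 / 2 := by ring
    rw [← h5]
    linarith
  calc ∏ j, ∑ b : Bool, Real.exp (l * (a j * sgn b))
      ≤ ∏ j, 2 * Real.exp (l ^ 2 * a j ^ 2 / 2) := by
        apply Finset.prod_le_prod
        · intro j _
          positivity
        · intro j _
          exact h3 j
    _ = 2 ^ n * Real.exp (l ^ 2 / 2) := by
        rw [Finset.prod_mul_distrib, Finset.prod_const, ← Real.exp_sum]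
        have : ∑ j, l ^ 2 * a j ^ 2 / 2 = l ^ 2 / 2 := by
          rw [← Finset.sum_div, ← Finset.mul_sum, ha]
          ring
        simp [this]

/-- Cell sum bound: for `S ⊆ cube n` nonempty and `l > 0`,
`∑_{x∈S} ⟨a,x⟩ ≤ |S| * (l/2 + log(2^n/|S|)/l)`. -/
lemma cell_bound {n : ℕ} (a : Fin n → ℝ) (ha : ∑ j, a j ^ 2 = 1)
    (S : Finset (Fin n → ℝ)) (hS : S ⊆ cube n) (hcard : 0 < S.card)
    {l : ℝ} (hl : 0 < l) :
    ∑ x ∈ S, (∑ j, a j * x j) ≤ S.card * (l / 2 + Real.log (2 ^ n / S.card) / l) := by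
  set c : ℝ := l ^ 2 / 2 + Real.log (2 ^ n / S.card) with hc
  have hm : (0 : ℝ) < S.card := by exact_mod_cast hcard
  have key : ∀ x ∈ S, l * (∑ j, a j * x j) ≤ Real.exp (l * (∑ j, a j * x j) - c) + c - 1 := by
    intro x _
    have := Real.add_one_le_exp (l * (∑ j, a j * x j) - c)
    linarith
  have h1 : l * ∑ x ∈ S, (∑ j, a j * x j)
      ≤ ∑ x ∈ S, Real.exp (l * (∑ j, a j * x j) - c) + S.card * (c - 1) := by
    rw [Finset.mul_sum]
    have := Finset.sum_le_sum key
    have e : ∀ x ∈ S, Real.exp (l * (∑ j, a j * x j) - c) + c - 1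
        = Real.exp (l * (∑ j, a j * x j) - c) + (c - 1) := fun _ _ => by ring
    rw [Finset.sum_congr rfl e, Finset.sum_add_distrib] at this
    simp only [Finset.sum_const, nsmul_eq_mul] at this
    linarith
  have h2 : ∑ x ∈ S, Real.exp (l * (∑ j, a j * x j) - c)
      ≤ Real.exp (-c) * (2 ^ n * Real.exp (l ^ 2 / 2)) := by
    have hsub : ∀ x : Fin n → ℝ, Real.exp (l * (∑ j, a j * x j) - c)
        = Real.exp (-c) * Real.exp (l * (∑ j, a j * x j)) := by
      intro x; rw [← Real.exp_add]; ring_nf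
    simp only [hsub]
    rw [← Finset.mul_sum]
    apply mul_le_mul_of_nonneg_left _ (Real.exp_nonneg _)
    calc ∑ x ∈ S, Real.exp (l * ∑ j, a j * x j)
        ≤ ∑ x ∈ cube n, Real.exp (l * ∑ j, a j * x j) :=
          Finset.sum_le_sum_of_subset_of_nonneg hS (fun x _ _ => Real.exp_nonneg _)
      _ ≤ 2 ^ n * Real.exp (l ^ 2 / 2) := mgf_bound a ha l
  have h3 : Real.exp (-c) * (2 ^ n * Real.exp (l ^ 2 / 2)) = S.card := by
    rw [hc, neg_add, Real.exp_add, Real.exp_neg (Real.log _), Real.exp_log (by positivity),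
      Real.exp_neg]
    have h2n : (0:ℝ) < 2 ^ n := by positivity
    have hexp : Real.exp (l ^ 2 / 2) ≠ 0 := Real.exp_ne_zero _
    field_simp
  have h4 : l * ∑ x ∈ S, (∑ j, a j * x j) ≤ S.card * c := by
    rw [h3] at h2
    have : (S.card : ℝ) + S.card * (c - 1) = S.card * c := by ring
    linarith
  rw [hc] at h4
  have expand : (S.card : ℝ) * (l ^ 2 / 2 + Real.log (2 ^ n / S.card))
      = l * (S.card * (l / 2 + Real.log (2 ^ n / S.card) / l)) := by
    field_simp
  rw [expand] at h4
  exact le_of_mul_le_mul_left h4 hl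

lemma mulVec_apply {n : ℕ} (A : Matrix (Fin n) (Fin n) ℝ) (x : Fin n → ℝ) (i : Fin n) :
    A.mulVec x i = ∑ j, A i j * x j := by
  simp [Matrix.mulVec, dotProduct]

lemma abs_le_norm {n : ℕ} (A : Matrix (Fin n) (Fin n) ℝ) (x : Fin n → ℝ) (i : Fin n) :
    |∑ j, A i j * x j| ≤ ‖A.mulVec x‖ := by
  rw [← mulVec_apply, ← Real.norm_eq_abs]
  exact norm_le_pi_norm (A.mulVec x) i

lemma exists_argmax {n : ℕ} (hn : 0 < n) (A : Matrix (Fin n) (Fin n) ℝ) (x : Fin n → ℝ) :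
    ∃ i, |∑ j, A i j * x j| = ‖A.mulVec x‖ := by
  have hne : (Finset.univ : Finset (Fin n)).Nonempty := by
    exact ⟨⟨0, hn⟩, Finset.mem_univ _⟩
  obtain ⟨i, _, hi⟩ := Finset.exists_mem_eq_sup (Finset.univ : Finset (Fin n)) hne
    (fun i => ‖A.mulVec x i‖₊)
  refine ⟨i, ?_⟩
  have : ‖A.mulVec x‖ = ↑(Finset.univ.sup fun b => ‖A.mulVec x b‖₊) := Pi.norm_def _
  rw [this, hi, ← mulVec_apply, coe_nnnorm, Real.norm_eq_abs]

lemma norm_mulVec_pos {n : ℕ} (hn : 2 ≤ n) {A : Matrix (Fin n) (Fin n) ℝ}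
    (htf : TieFree A) {x : Fin n → ℝ} (hx : x ∈ cube n) : 0 < ‖A.mulVec x‖ := by
  rcases (norm_nonneg (A.mulVec x)).lt_or_eq with h | h
  · exact h
  · exfalso
    have i0 : Fin n := ⟨0, by omega⟩
    have hz : ∀ i : Fin n, ∑ j, A i j * x j = 0 := by
      intro i
      have := abs_le_norm A x i
      rw [← h] at this
      have := abs_nonneg (∑ j, A i j * x j)
      have : |∑ j, A i j * x j| = 0 := le_antisymm (by rw [← h] at *; linarith) (abs_nonneg _)
      exact abs_eq_zero.mp this
    exact htf x hx ⟨0, by omega⟩ ⟨1, by omega⟩ (by simp [Fin.ext_iff])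
      (by rw [hz ⟨0, by omega⟩, hz ⟨1, by omega⟩])

def cellN {n : ℕ} (A : Matrix (Fin n) (Fin n) ℝ) (i : Fin n) : Finset (Fin n → ℝ) :=
  (cube n).filter (fun x => ‖A.mulVec x‖ = -∑ j, A i j * x j)

def cellT {n : ℕ} (A : Matrix (Fin n) (Fin n) ℝ) (i : Fin n) : Finset (Fin n → ℝ) :=
  (cube n).filter (fun x => |∑ j, A i j * x j| = ‖A.mulVec x‖)

lemma cellT_eq {n : ℕ} (A : Matrix (Fin n) (Fin n) ℝ) (i : Fin n) :
    cellT A i = cellS A i ∪ cellN A i := by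
  ext x
  simp only [cellT, cellS, cellN, Finset.mem_union, Finset.mem_filter]
  constructor
  · rintro ⟨hx, h⟩
    rcases (abs_eq (norm_nonneg (A.mulVec x))).mp h with h1 | h1
    · exact Or.inl ⟨hx, h1.symm⟩
    · exact Or.inr ⟨hx, by linarith⟩
  · rintro (⟨hx, h⟩ | ⟨hx, h⟩)
    · exact ⟨hx, (abs_eq (norm_nonneg _)).mpr (Or.inl h.symm)⟩
    · exact ⟨hx, (abs_eq (norm_nonneg _)).mpr (Or.inr (by linarith))⟩

lemma cellSN_disj {n : ℕ} (hn : 2 ≤ n) {A : Matrix (Fin n) (Fin n) ℝ} (htf : TieFree A)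
    (i : Fin n) : Disjoint (cellS A i) (cellN A i) := by
  rw [Finset.disjoint_left]
  intro x hxS hxN
  simp only [cellS, cellN, Finset.mem_filter] at hxS hxN
  have := norm_mulVec_pos hn htf hxS.1
  linarith [hxS.2, hxN.2]

lemma cellT_disj {n : ℕ} {A : Matrix (Fin n) (Fin n) ℝ} (htf : TieFree A)
    {i j : Fin n} (hij : i ≠ j) : Disjoint (cellT A i) (cellT A j) := by
  rw [Finset.disjoint_left]
  intro x hxi hxj
  simp only [cellT, Finset.mem_filter] at hxi hxj
  refine htf x hxi.1 i j hij ?_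
  rw [← sq_abs, ← sq_abs (∑ k, A j k * x k), hxi.2, hxj.2]

lemma cube_eq_biUnion {n : ℕ} (hn : 2 ≤ n) (A : Matrix (Fin n) (Fin n) ℝ) :
    cube n = Finset.univ.biUnion (fun i => cellT A i) := by
  ext x
  simp only [Finset.mem_biUnion, Finset.mem_univ, true_and, cellT, Finset.mem_filter]
  constructor
  · intro hx
    obtain ⟨i, hi⟩ := exists_argmax (by omega) A x
    exact ⟨i, hx, hi⟩
  · rintro ⟨i, hx, _⟩
    exact hx

lemma cellN_card {n : ℕ} (A : Matrix (Fin n) (Fin n) ℝ) (i : Fin n) :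
    (cellN A i).card = (cellS A i).card := by
  apply Finset.card_bij (fun x _ => -x)
  · intro x hx
    simp only [cellN, Finset.mem_filter] at hx
    simp only [cellS, Finset.mem_filter]
    refine ⟨neg_mem_cube hx.1, ?_⟩
    rw [Matrix.mulVec_neg, norm_neg]
    rw [hx.2]
    simp [mul_neg]
  · intro x hx y hy h
    have := congrArg Neg.neg h
    simpa using this
  · intro y hy
    refine ⟨-y, ?_, by simp⟩
    simp only [cellS, Finset.mem_filter] at hy
    simp only [cellN, Finset.mem_filter]
    refine ⟨neg_mem_cube hy.1, ?_⟩
    rw [Matrix.mulVec_neg, norm_neg, hy.2]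
    simp [mul_neg]

lemma cellN_sum {n : ℕ} (A : Matrix (Fin n) (Fin n) ℝ) (i : Fin n) :
    ∑ x ∈ cellN A i, ‖A.mulVec x‖ = ∑ x ∈ cellS A i, (∑ j, A i j * x j) := by
  apply Finset.sum_bij (fun x _ => -x)
  · intro x hx
    simp only [cellN, Finset.mem_filter] at hx
    simp only [cellS, Finset.mem_filter]
    refine ⟨neg_mem_cube hx.1, ?_⟩
    rw [Matrix.mulVec_neg, norm_neg, hx.2]
    simp [mul_neg]
  · intro x hx y hy h
    have := congrArg Neg.neg h
    simpa using this
  · intro y hy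
    refine ⟨-y, ?_, by simp⟩
    simp only [cellS, Finset.mem_filter] at hy
    simp only [cellN, Finset.mem_filter]
    refine ⟨neg_mem_cube hy.1, ?_⟩
    rw [Matrix.mulVec_neg, norm_neg, hy.2]
    simp [mul_neg]
  · intro x hx
    simp only [cellN, Finset.mem_filter] at hx
    rw [hx.2]
    simp [mul_neg]

lemma card_partition {n : ℕ} (hn : 2 ≤ n) {A : Matrix (Fin n) (Fin n) ℝ} (htf : TieFree A) :
    (∑ i, (cellS A i).card) * 2 = 2 ^ n := by
  have h1 : (cube n).card = ∑ i, (cellT A i).card := by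
    rw [cube_eq_biUnion hn A]
    exact Finset.card_biUnion (fun i _ j _ hij => cellT_disj htf hij)
  have h2 : ∀ i, (cellT A i).card = (cellS A i).card * 2 := by
    intro i
    rw [cellT_eq, Finset.card_union_of_disjoint (cellSN_disj hn htf i), cellN_card]
    ring
  rw [card_cube] at h1
  rw [h1, Finset.sum_congr rfl (fun i _ => h2 i), ← Finset.sum_mul]

lemma sum_norm_partition {n : ℕ} (hn : 2 ≤ n) {A : Matrix (Fin n) (Fin n) ℝ} (htf : TieFree A) :
    ∑ x ∈ cube n, ‖A.mulVec x‖ = 2 * ∑ i, ∑ x ∈ cellS A i, (∑ j, A i j * x j) := by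
  have h1 : ∑ x ∈ cube n, ‖A.mulVec x‖ = ∑ i, ∑ x ∈ cellT A i, ‖A.mulVec x‖ := by
    rw [cube_eq_biUnion hn A]
    exact Finset.sum_biUnion (fun i _ j _ hij => cellT_disj htf hij)
  rw [h1]
  rw [Finset.mul_sum]
  apply Finset.sum_congr rfl
  intro i _
  rw [cellT_eq, Finset.sum_union (cellSN_disj hn htf i), cellN_sum]
  have : ∑ x ∈ cellS A i, ‖A.mulVec x‖ = ∑ x ∈ cellS A i, (∑ j, A i j * x j) := by
    apply Finset.sum_congr rfl
    intro x hx
    simp only [cellS, Finset.mem_filter] at hx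
    exact hx.2
  rw [this]
  ring

lemma kl_ineq {a q : ℝ} (hq : 0 < q) (ha : 0 ≤ a) :
    (Real.sqrt a - Real.sqrt q) ^ 2 ≤ a * Real.log (a / q) - a + q := by
  rcases ha.lt_or_eq with hpos | hzero
  · set s1 := Real.sqrt a with hs1
    set s2 := Real.sqrt q with hs2
    have hs1p : 0 < s1 := Real.sqrt_pos.mpr hpos
    have hs2p : 0 < s2 := Real.sqrt_pos.mpr hq
    have hsq1 : s1 ^ 2 = a := Real.sq_sqrt ha
    have hsq2 : s2 ^ 2 = q := Real.sq_sqrt hq.le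
    have hdiv : Real.sqrt (a / q) = s1 / s2 := Real.sqrt_div ha q
    have hlog : Real.log (a / q) = 2 * Real.log (s1 / s2) := by
      rw [← hdiv, Real.log_sqrt (by positivity : (0:ℝ) ≤ a / q)]
      ring
    have hlb : 1 - s2 / s1 ≤ Real.log (s1 / s2) := by
      have h := Real.log_le_sub_one_of_pos (show (0:ℝ) < s2 / s1 by positivity)
      have : Real.log (s2 / s1) = -Real.log (s1 / s2) := by
        rw [← Real.log_inv]
        congr 1
        field_simp
      linarith [this ▸ h]
    have key : 2 * (s1 ^ 2) * (1 - s2 / s1) = 2 * s1 ^ 2 - 2 * s1 * s2 := by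
      field_simp
    have hmul : 2 * a * (1 - s2 / s1) ≤ a * Real.log (a / q) := by
      rw [hlog]
      have := mul_le_mul_of_nonneg_left hlb (by linarith : (0:ℝ) ≤ 2 * a)
      linarith [this]
    rw [← hsq1] at hmul ⊢
    rw [key] at hmul
    nlinarith [hmul, hsq2]
  · rw [← hzero]
    simp [Real.sqrt_zero]
    rw [Real.sq_sqrt hq.le]

lemma kl_quad {a q θ : ℝ} (hq : 0 < q) (ha : 0 ≤ a) (haθ : a ≤ θ) (hqθ : q ≤ θ) :
    (a - q) ^ 2 ≤ 4 * θ * (a * Real.log (a / q) - a + q) := by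
  have hk := kl_ineq hq ha
  have h1 : Real.sqrt a ≤ Real.sqrt θ := Real.sqrt_le_sqrt haθ
  have h2 : Real.sqrt q ≤ Real.sqrt θ := Real.sqrt_le_sqrt hqθ
  have hsa : Real.sqrt a ^ 2 = a := Real.sq_sqrt ha
  have hsq : Real.sqrt q ^ 2 = q := Real.sq_sqrt hq.le
  have hsθ : Real.sqrt θ ^ 2 = θ := Real.sq_sqrt (le_trans hq.le hqθ)
  have hfact : (a - q) = (Real.sqrt a - Real.sqrt q) * (Real.sqrt a + Real.sqrt q) := by
    nlinarith [hsa, hsq]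
  have hsum : (Real.sqrt a + Real.sqrt q) ^ 2 ≤ 4 * θ := by
    nlinarith [Real.sqrt_nonneg a, Real.sqrt_nonneg q, Real.sqrt_nonneg θ]
  calc (a - q) ^ 2 = (Real.sqrt a - Real.sqrt q) ^ 2 * (Real.sqrt a + Real.sqrt q) ^ 2 := by
        rw [hfact]; ring
    _ ≤ 4 * θ * (a * Real.log (a / q) - a + q) := by
        nlinarith [sq_nonneg (Real.sqrt a - Real.sqrt q),
          sq_nonneg (Real.sqrt a + Real.sqrt q), hk, hsum]

lemma cell_est_small {n : ℕ} {A : Matrix (Fin n) (Fin n) ℝ} (i : Fin n)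
    (hrow : ∑ j, A i j ^ 2 = 1) {s Ln : ℝ} (hs : 0 < s) (hss : s ^ 2 = 2 * Ln)
    (hLn : Real.log (2 * (n : ℝ)) = Ln) (hn : 0 < n) :
    2 * (2 ^ n : ℝ)⁻¹ * ∑ x ∈ cellS A i, (∑ j, A i j * x j) ≤
      2 * (((cellS A i).card : ℝ) / 2 ^ n) * s
      - 2 / s * (((cellS A i).card : ℝ) / 2 ^ n - 1 / (2 * n))
      - 2 / s * ((((cellS A i).card : ℝ) / 2 ^ n)
            * Real.log ((((cellS A i).card : ℝ) / 2 ^ n) / (1 / (2 * n)))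
          - ((cellS A i).card : ℝ) / 2 ^ n + 1 / (2 * n)) := by
  set m : ℕ := (cellS A i).card with hm
  have h2n : (0:ℝ) < 2 ^ n := by positivity
  have hnR : (0:ℝ) < n := by exact_mod_cast hn
  rcases Nat.eq_zero_or_pos m with h0 | hpos
  · rw [hm] at h0
    rw [Finset.card_eq_zero] at h0
    rw [hm, h0]
    simp only [Finset.sum_empty, Finset.card_empty, Nat.cast_zero, zero_div, mul_zero,
      zero_mul, zero_sub, zero_add, zero_mul]
    ring_nf
    exact le_refl 0
  · have hmR : (0:ℝ) < m := by exact_mod_cast hpos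
    have hcb := cell_bound (fun j => A i j) hrow (cellS A i) (Finset.filter_subset _ _) hpos hs
    rw [← hm] at hcb
    set α : ℝ := (m : ℝ) / 2 ^ n with hα
    have hαpos : 0 < α := by positivity
    have hlog1 : Real.log ((2:ℝ) ^ n / m) = - Real.log α := by
      rw [hα, ← Real.log_inv]
      congr 1
      field_simp
    have step1 : 2 * (2 ^ n : ℝ)⁻¹ * ∑ x ∈ cellS A i, (∑ j, A i j * x j)
        ≤ 2 * α * (s / 2 + (- Real.log α) / s) := by
      rw [← hlog1]
      calc 2 * (2 ^ n : ℝ)⁻¹ * ∑ x ∈ cellS A i, (∑ j, A i j * x j)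
          ≤ 2 * (2 ^ n : ℝ)⁻¹ * ((m : ℝ) * (s / 2 + Real.log (2 ^ n / m) / s)) := by
            apply mul_le_mul_of_nonneg_left hcb (by positivity)
        _ = 2 * α * (s / 2 + Real.log ((2:ℝ) ^ n / m) / s) := by
            rw [hα]; ring
    refine le_trans step1 (le_of_eq ?_)
    have hq0 : (0:ℝ) < 1 / (2 * n) := by positivity
    have hlogq : Real.log ((1:ℝ) / (2 * n)) = - Ln := by
      rw [one_div, Real.log_inv, hLn]
    have hlogdiv : Real.log (α / (1 / (2 * n))) = Real.log α + Ln := by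
      rw [Real.log_div (ne_of_gt hαpos) (ne_of_gt hq0), hlogq]
      ring
    rw [hlogdiv]
    have hs' : s ≠ 0 := ne_of_gt hs
    field_simp
    ring_nf
    linear_combination (-(α * (n:ℝ))) * hss

lemma cell_est_big {n : ℕ} {A : Matrix (Fin n) (Fin n) ℝ} (i : Fin n)
    (hrow : ∑ j, A i j ^ 2 = 1) {θ t : ℝ} (hθpos : 0 < θ)
    (hαθ : θ < ((cellS A i).card : ℝ) / 2 ^ n)
    (hαhalf : ((cellS A i).card : ℝ) / 2 ^ n ≤ 1 / 2)
    (ht : Real.sqrt (2 * Real.log θ⁻¹) ≤ t) :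
    2 * (2 ^ n : ℝ)⁻¹ * ∑ x ∈ cellS A i, (∑ j, A i j * x j) ≤
      2 * (((cellS A i).card : ℝ) / 2 ^ n) * t := by
  set m : ℕ := (cellS A i).card with hm
  set α : ℝ := (m : ℝ) / 2 ^ n with hα
  have h2n : (0:ℝ) < 2 ^ n := by positivity
  have hαpos : 0 < α := lt_trans hθpos hαθ
  have hmpos : 0 < m := by
    by_contra h
    push_neg at h
    interval_cases m
    · rw [hα] at hαpos; simp at hαpos
  have hαinv : (2:ℝ) ≤ α⁻¹ := by
    rw [le_inv_comm₀ (by norm_num) hαpos]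
    simpa using hαhalf
  have hlogα : Real.log 2 ≤ Real.log α⁻¹ := Real.log_le_log (by norm_num) hαinv
  have hlogpos : 0 < Real.log α⁻¹ := lt_of_lt_of_le (Real.log_pos (by norm_num)) hlogα
  set l : ℝ := Real.sqrt (2 * Real.log α⁻¹) with hl
  have hlpos : 0 < l := Real.sqrt_pos.mpr (by linarith)
  have hll : l ^ 2 = 2 * Real.log α⁻¹ := Real.sq_sqrt (by linarith)
  have hcb := cell_bound (fun j => A i j) hrow (cellS A i) (Finset.filter_subset _ _) hmpos hlpos
  rw [← hm] at hcb
  have hlog1 : Real.log ((2:ℝ) ^ n / m) = Real.log α⁻¹ := by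
    congr 1
    rw [hα]
    field_simp
  rw [hlog1] at hcb
  have heq : (m : ℝ) * (l / 2 + Real.log α⁻¹ / l) = (m : ℝ) * l := by
    have : Real.log α⁻¹ = l ^ 2 / 2 := by linarith
    rw [this]
    field_simp
    ring
  rw [heq] at hcb
  have hlt : l ≤ t := by
    refine le_trans ?_ ht
    apply Real.sqrt_le_sqrt
    have : α⁻¹ ≤ θ⁻¹ := by
      apply inv_anti₀ hθpos hαθ.le
    nlinarith [Real.log_le_log (by positivity) this]
  calc 2 * (2 ^ n : ℝ)⁻¹ * ∑ x ∈ cellS A i, (∑ j, A i j * x j)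
      ≤ 2 * (2 ^ n : ℝ)⁻¹ * ((m : ℝ) * l) := by
        apply mul_le_mul_of_nonneg_left hcb (by positivity)
    _ = 2 * α * l := by rw [hα]; ring
    _ ≤ 2 * α * t := by nlinarith

lemma final_arith {n : ℕ} (α k : Fin n → ℝ) (q s t θ loglog : ℝ)
    (hspos : 0 < s) (hs8 : 8 ≤ s) (hqpos : 0 < q) (hθ : θ = 1 / s) (hts : t ≤ s / 2)
    (hα0 : ∀ i, 0 ≤ α i) (hαsum : ∑ i, α i = 1 / 2)
    (hqn : q * n = 1 / 2)
    (hk0 : ∀ i, 0 ≤ k i)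
    (hkq : ∀ i, α i ≤ θ → (α i - q) ^ 2 ≤ 4 * θ * k i)
    (hkb : ∀ i, ¬(α i ≤ θ) → (α i - q) ^ 2 ≤ α i / 2)
    (hmain : s - loglog / s ≤
      ∑ i, (if α i ≤ θ then 2 * α i * s - 2 / s * (α i - q) - 2 / s * k i else 2 * α i * t)) :
    ∑ i, (α i - q) ^ 2 ≤ (5 / 2) * loglog / s := by
  classical
  set p : Fin n → Prop := fun i => α i ≤ θ with hp
  set P : Finset (Fin n) := Finset.univ.filter p with hP
  set B : Finset (Fin n) := Finset.univ.filter (fun i => ¬ p i) with hB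
  set b : ℝ := ∑ i ∈ B, α i with hb
  set K : ℝ := ∑ i ∈ P, k i with hK
  have hbpos : 0 ≤ b := Finset.sum_nonneg (fun i _ => hα0 i)
  have hKpos : 0 ≤ K := Finset.sum_nonneg (fun i _ => hk0 i)
  have hsplitα : ∑ i ∈ P, α i + b = 1 / 2 := by
    rw [hb, hP, hB, ← hαsum]
    exact Finset.sum_filter_add_sum_filter_not _ _ _
  -- rewrite the main sum
  have hsum1 : ∑ i, (if p i then 2 * α i * s - 2 / s * (α i - q) - 2 / s * k i else 2 * α i * t)
      = ∑ i ∈ P, (2 * α i * s - 2 / s * (α i - q) - 2 / s * k i) + ∑ i ∈ B, 2 * α i * t := by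
    rw [← Finset.sum_filter_add_sum_filter_not Finset.univ p]
    congr 1
    · exact Finset.sum_congr rfl (fun i hi => by
        rw [if_pos ((Finset.mem_filter.mp hi).2)])
    · exact Finset.sum_congr rfl (fun i hi => by
        rw [if_neg ((Finset.mem_filter.mp hi).2)])
  have hsum2 : ∑ i ∈ P, (2 * α i * s - 2 / s * (α i - q) - 2 / s * k i)
      = 2 * s * (∑ i ∈ P, α i) - 2 / s * (∑ i ∈ P, (α i - q)) - 2 / s * K := by
    have e : ∀ i ∈ P, 2 * α i * s - 2 / s * (α i - q) - 2 / s * k i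
        = 2 * s * α i - 2 / s * (α i - q) - 2 / s * k i := fun i _ => by ring
    rw [Finset.sum_congr rfl e, Finset.sum_sub_distrib, Finset.sum_sub_distrib,
      ← Finset.mul_sum, ← Finset.mul_sum, ← Finset.mul_sum, hK]
  have hPcard : (P.card : ℝ) ≤ n := by
    exact_mod_cast le_trans (Finset.card_le_card (Finset.filter_subset _ _))
      (le_of_eq (Finset.card_univ.trans (Fintype.card_fin n)))
  have hPq : ∑ i ∈ P, (α i - q) ≥ -b := by
    rw [Finset.sum_sub_distrib, Finset.sum_const, nsmul_eq_mul]
    have h1 : (P.card : ℝ) * q ≤ 1 / 2 := by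
      calc (P.card : ℝ) * q ≤ (n : ℝ) * q := by
            apply mul_le_mul_of_nonneg_right hPcard hqpos.le
        _ = 1 / 2 := by rw [mul_comm]; exact hqn
    have h2 : ∑ i ∈ P, α i = 1 / 2 - b := by linarith
    linarith
  have hBt : ∑ i ∈ B, 2 * α i * t = 2 * t * b := by
    rw [hb, Finset.mul_sum]
    exact Finset.sum_congr rfl (fun i _ => by ring)
  -- main inequality gives bounds on b and K
  have hcoef : (1:ℝ) ≤ 2 * s - 2 * t - 2 / s := by
    have h1 : 2 / s ≤ 1 / 4 := by
      rw [div_le_div_iff₀ hspos (by norm_num)]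
      linarith
    linarith
  have hkey : (2 * s - 2 * t - 2 / s) * b + 2 / s * K ≤ loglog / s := by
    have h2s : (0:ℝ) < 2 / s := by positivity
    have hup : ∑ i, (if p i then 2 * α i * s - 2 / s * (α i - q) - 2 / s * k i else 2 * α i * t)
        ≤ s - (2 * s - 2 * t - 2 / s) * b - 2 / s * K := by
      rw [hsum1, hsum2, hBt]
      have h3 : 2 * s * (∑ i ∈ P, α i) = s - 2 * s * b := by
        have : ∑ i ∈ P, α i = 1 / 2 - b := by linarith
        rw [this]; ring
      have h4 : - (2 / s * (∑ i ∈ P, (α i - q))) ≤ 2 / s * b := by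
        have := mul_le_mul_of_nonneg_left hPq h2s.le
        linarith
      linarith
    have := le_trans hmain hup
    linarith
  have hbb : b ≤ loglog / s := by
    nlinarith [mul_le_mul_of_nonneg_right hcoef hbpos,
      mul_nonneg (le_of_lt (show (0:ℝ) < 2/s by positivity)) hKpos]
  have hKK : K ≤ loglog / 2 := by
    have h1 : 2 / s * K ≤ loglog / s := by
      nlinarith [mul_le_mul_of_nonneg_right hcoef hbpos]
    have h2 := mul_le_mul_of_nonneg_left h1 (le_of_lt (half_pos hspos))
    have e1 : s / 2 * (2 / s * K) = K := by field_simp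
    have e2 : s / 2 * (loglog / s) = loglog / 2 := by field_simp
    rw [e1, e2] at h2
    exact h2
  -- final assembly
  have hD : ∑ i, (α i - q) ^ 2 = ∑ i ∈ P, (α i - q) ^ 2 + ∑ i ∈ B, (α i - q) ^ 2 :=
    (Finset.sum_filter_add_sum_filter_not Finset.univ p _).symm
  have hDP : ∑ i ∈ P, (α i - q) ^ 2 ≤ 4 * θ * K := by
    rw [hK, Finset.mul_sum]
    apply Finset.sum_le_sum
    intro i hi
    exact hkq i (Finset.mem_filter.mp hi).2
  have hDB : ∑ i ∈ B, (α i - q) ^ 2 ≤ b / 2 := by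
    rw [hb]
    rw [Finset.sum_div]
    apply Finset.sum_le_sum
    intro i hi
    exact hkb i (Finset.mem_filter.mp hi).2
  have hθK : 4 * θ * K ≤ 2 * loglog / s := by
    rw [hθ]
    have e : 4 * (1 / s) * K = 4 * K / s := by ring
    rw [e]
    have h2 : 4 * K ≤ 2 * loglog := by linarith
    have e2 : 2 * loglog / s = 2 * loglog / s := rfl
    have h3 := mul_le_mul_of_nonneg_right h2 (le_of_lt (inv_pos.mpr hspos))
    rw [div_eq_mul_inv, div_eq_mul_inv]
    exact h3
  have hfin : b / 2 ≤ loglog / (2 * s) := by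
    have e : loglog / (2 * s) = (loglog / s) / 2 := by ring
    rw [e]
    linarith
  calc ∑ i, (α i - q) ^ 2 ≤ 4 * θ * K + b / 2 := by rw [hD]; linarith
    _ ≤ 2 * loglog / s + loglog / (2 * s) := by linarith
    _ = (5 / 2) * loglog / s := by field_simp; ring


set_option maxHeartbeats 2000000 in
theorem stmt8 : ∃ C : ℝ, 0 < C ∧ ∃ N : ℕ, ∀ n : ℕ, N ≤ n →
    ∀ A : Matrix (Fin n) (Fin n) ℝ,
    (∀ i, ∑ j, (A i j) ^ 2 = 1) → TieFree A →
    Real.sqrt (2 * Real.log (2 * n)) -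
        Real.log (Real.log (2 * n)) / Real.sqrt (2 * Real.log (2 * n)) ≤ badBeta A →
    ∑ i : Fin n, (((cellS A i).card : ℝ) / 2 ^ n - 1 / (2 * n)) ^ 2 ≤
      C * Real.log (Real.log (2 * n)) / Real.sqrt (Real.log (2 * n)) := by
  refine ⟨2, by norm_num, 10 ^ 15, ?_⟩
  intro n hNn A hrows htf hβ
  have hn2 : 2 ≤ n := le_trans (by norm_num) hNn
  have hn0 : 0 < n := by omega
  have hnR : (10:ℝ) ^ 15 ≤ (n : ℝ) := by exact_mod_cast hNn
  have hnRpos : (0:ℝ) < n := lt_of_lt_of_le (by norm_num) hnR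
  set Ln : ℝ := Real.log (2 * (n : ℝ)) with hLndef
  have hLn32 : 32 ≤ Ln := by
    rw [hLndef, Real.le_log_iff_exp_le (by linarith)]
    have h1 : Real.exp 32 = Real.exp 1 ^ (32 : ℕ) := by
      rw [← Real.exp_nat_mul]; norm_num
    have h2 : Real.exp 1 ^ (32 : ℕ) ≤ 3 ^ (32 : ℕ) := by
      apply pow_le_pow_left₀ (Real.exp_pos 1).le
      linarith [Real.exp_one_lt_d9]
    have h3 : (3:ℝ) ^ (32 : ℕ) ≤ 2 * 10 ^ 15 := by norm_num
    rw [h1]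
    linarith
  set s : ℝ := Real.sqrt (2 * Ln) with hsdef
  have hspos : 0 < s := Real.sqrt_pos.mpr (by linarith)
  have hss : s ^ 2 = 2 * Ln := Real.sq_sqrt (by linarith)
  have hs8 : 8 ≤ s := by
    have h64 : (8:ℝ) = Real.sqrt 64 := by
      rw [show (64:ℝ) = 8 ^ 2 by norm_num, Real.sqrt_sq (by norm_num)]
    rw [h64, hsdef]
    exact Real.sqrt_le_sqrt (by linarith)
  set q : ℝ := 1 / (2 * (n : ℝ)) with hqdef
  have hqpos : 0 < q := by rw [hqdef]; positivity
  set θ : ℝ := 1 / s with hθdef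
  have hθpos : 0 < θ := by rw [hθdef]; positivity
  have hs2n : s ≤ 2 * (n : ℝ) := by
    rw [hsdef]
    have h1 : 2 * Ln ≤ (2 * (n:ℝ)) ^ 2 := by
      have := Real.log_le_sub_one_of_pos (show (0:ℝ) < 2 * n by linarith)
      rw [← hLndef] at this
      nlinarith
    calc Real.sqrt (2 * Ln) ≤ Real.sqrt ((2 * (n:ℝ)) ^ 2) := Real.sqrt_le_sqrt h1
      _ = 2 * n := Real.sqrt_sq (by linarith)
  have hqθ : q ≤ θ := by
    rw [hqdef, hθdef]
    exact one_div_le_one_div_of_le hspos hs2n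
  set t : ℝ := Real.sqrt (2 * Real.log s) with htdef
  have hts : t ≤ s / 2 := by
    have hlogs : Real.log s ≤ s - 1 := Real.log_le_sub_one_of_pos hspos
    have h1 : 2 * Real.log s ≤ (s / 2) ^ 2 := by nlinarith
    rw [htdef]
    calc Real.sqrt (2 * Real.log s) ≤ Real.sqrt ((s / 2) ^ 2) := Real.sqrt_le_sqrt h1
      _ = s / 2 := Real.sqrt_sq (by linarith)
  set α : Fin n → ℝ := fun i => ((cellS A i).card : ℝ) / 2 ^ n with hαdef
  have h2npos : (0:ℝ) < 2 ^ n := by positivity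
  have hα0 : ∀ i, 0 ≤ α i := by
    intro i; rw [hαdef]; positivity
  have hαsum : ∑ i, α i = 1 / 2 := by
    have hcp := card_partition hn2 htf
    have hcpR : ((∑ i, (cellS A i).card : ℕ) : ℝ) * 2 = 2 ^ n := by
      exact_mod_cast congrArg (fun m : ℕ => (m : ℝ)) hcp
    push_cast at hcpR
    rw [hαdef, ← Finset.sum_div]
    rw [div_eq_iff (ne_of_gt h2npos)]
    linarith
  have hαhalf : ∀ i, α i ≤ 1 / 2 := by
    intro i
    calc α i ≤ ∑ j, α j := Finset.single_le_sum (fun j _ => hα0 j) (Finset.mem_univ i)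
      _ = 1 / 2 := hαsum
  set k : Fin n → ℝ := fun i => α i * Real.log (α i / q) - α i + q with hkdef
  have hk0 : ∀ i, 0 ≤ k i := by
    intro i
    rw [hkdef]
    exact le_trans (sq_nonneg _) (kl_ineq hqpos (hα0 i))
  set loglog : ℝ := Real.log Ln with hlldef
  -- main inequality
  have hclaim : ∀ i, 2 * (2 ^ n : ℝ)⁻¹ * ∑ x ∈ cellS A i, (∑ j, A i j * x j) ≤
      (if α i ≤ θ then 2 * α i * s - 2 / s * (α i - q) - 2 / s * k i else 2 * α i * t) := by
    intro i
    by_cases hcase : α i ≤ θ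
    · rw [if_pos hcase]
      exact cell_est_small i (hrows i) hspos hss rfl hn0
    · rw [if_neg hcase]
      have hinv : θ⁻¹ = s := by rw [hθdef]; field_simp
      have ht' : Real.sqrt (2 * Real.log θ⁻¹) ≤ t := by
        rw [hinv, htdef]
      exact cell_est_big i (hrows i) hθpos (not_le.mp hcase) (hαhalf i) ht'
  have hmain : s - loglog / s ≤
      ∑ i, (if α i ≤ θ then 2 * α i * s - 2 / s * (α i - q) - 2 / s * k i else 2 * α i * t) := by
    have hbeta : badBeta A
        = ∑ i, 2 * (2 ^ n : ℝ)⁻¹ * ∑ x ∈ cellS A i, (∑ j, A i j * x j) := by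
      rw [badBeta, sum_norm_partition hn2 htf, ← Finset.mul_sum]
      ring
    have h1 := Finset.sum_le_sum (fun i (_ : i ∈ Finset.univ) => hclaim i)
    rw [← hbeta] at h1
    exact le_trans hβ h1
  have hkq : ∀ i, α i ≤ θ → (α i - q) ^ 2 ≤ 4 * θ * k i := by
    intro i hi
    rw [hkdef]
    exact kl_quad hqpos (hα0 i) hi hqθ
  have hkb : ∀ i, ¬(α i ≤ θ) → (α i - q) ^ 2 ≤ α i / 2 := by
    intro i hi
    push_neg at hi
    have h1 : q ≤ α i := le_trans hqθ hi.le
    have h2 := hαhalf i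
    nlinarith [hα0 i]
  have hqn : q * n = 1 / 2 := by
    rw [hqdef]
    field_simp
  have hfa := final_arith α k q s t θ loglog hspos hs8 hqpos hθdef hts hα0 hαsum hqn
    hk0 hkq hkb hmain
  -- conclude
  have hD0 : 0 ≤ ∑ i, (α i - q) ^ 2 := Finset.sum_nonneg (fun i _ => sq_nonneg _)
  have hll0 : 0 ≤ loglog := by
    by_contra h
    push_neg at h
    have : (5 / 2) * loglog / s < 0 := by
      apply div_neg_of_neg_of_pos _ hspos
      linarith
    linarith
  have hsqrtLn : 0 < Real.sqrt Ln := Real.sqrt_pos.mpr (by linarith)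
  have hsplit : s = Real.sqrt 2 * Real.sqrt Ln := by
    rw [hsdef, Real.sqrt_mul (by norm_num)]
  have hsqrt2 : (5:ℝ) / 4 ≤ Real.sqrt 2 := by
    nlinarith [Real.sq_sqrt (show (0:ℝ) ≤ 2 by norm_num), Real.sqrt_nonneg 2]
  have hslb : (5 / 4) * Real.sqrt Ln ≤ s := by
    rw [hsplit]
    exact mul_le_mul_of_nonneg_right hsqrt2 hsqrtLn.le
  have hfinal : (5 / 2) * loglog / s ≤ 2 * loglog / Real.sqrt Ln := by
    have h1 : (5 / 2) * loglog / s ≤ (5 / 2) * loglog / ((5 / 4) * Real.sqrt Ln) := by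
      apply div_le_div_of_nonneg_left (by linarith) (by positivity) hslb
    have h2 : (5 / 2) * loglog / ((5 / 4) * Real.sqrt Ln) = 2 * loglog / Real.sqrt Ln := by
      rw [div_eq_div_iff (by positivity) (by positivity)]
      ring
    linarith
  have hgoal : ∑ i : Fin n, (((cellS A i).card : ℝ) / 2 ^ n - 1 / (2 * n)) ^ 2
      = ∑ i, (α i - q) ^ 2 := by
    apply Finset.sum_congr rfl
    intro i _
    simp only [hαdef, hqdef]
  rw [hgoal]
  calc ∑ i, (α i - q) ^ 2
      ≤ (5 / 2) * loglog / s := hfa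
    _ ≤ 2 * loglog / Real.sqrt Ln := hfinal
    _ = 2 * Real.log (Real.log (2 * n)) / Real.sqrt (Real.log (2 * n)) := by
      rw [hlldef, hLndef]
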